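/- Let (X, ⟨under⟩*, ⟨over⟩*) be a biquandle of finite type m, and k a positive integer. Then X with the families {⟨under⟩*^{[i]}}_{i ∈ ℤ_{km}} and {⟨over⟩*^{[i]}}_{i ∈ ℤ_{km}} is a ℤ_{km}-family of biquandles. -/

import Mathlib

structure Biquandle (X : Type*) where
  nonempty : Nonempty X
  u : X → X → X
  o : X → X → X
  diag : ∀ x, u x x = o x x
  uBij : ∀ y, Function.Bijective fun x => u x y
  oBij : ∀ y, Function.Bijective fun x => o x y
  SBij : Function.Bijective fun p : X × X => (o p.2 p.1, u p.1 p.2)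
  ex1 : ∀ x y z, u (u x y) (u z y) = u (u x z) (o y z)
  ex2 : ∀ x y z, o (u x y) (u z y) = u (o x z) (o y z)
  ex3 : ∀ x y z, o (o x y) (o z y) = o (o x z) (u y z)


/-- A `G`-family of biquandles: a nonempty set `X` with families of operations
`u g` (⟨under⟩*^g) and `o g` (⟨over⟩*^g) indexed by a group `G`. -/
structure GFamilyBiquandle (G : Type*) [Group G] (X : Type*) where
  nonempty : Nonempty X
  u : G → X → X → X
  o : G → X → X → X
  diag : ∀ (g : G) (x : X), u g x x = o g x x
  uComp : ∀ (g h : G) (x y : X), u (g * h) x y = u h (u g x y) (u g y y)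
  uOne : ∀ x y : X, u 1 x y = x
  oComp : ∀ (g h : G) (x y : X), o (g * h) x y = o h (o g x y) (o g y y)
  oOne : ∀ x y : X, o 1 x y = x
  ex1 : ∀ (g h : G) (x y z : X),
    u h (u g x y) (o g z y) = u (h⁻¹ * g * h) (u h x z) (u h y z)
  ex2 : ∀ (g h : G) (x y z : X),
    u h (o g x y) (o g z y) = o (h⁻¹ * g * h) (u h x z) (u h y z)
  ex3 : ∀ (g h : G) (x y z : X),
    o h (o g x y) (o g z y) = o (h⁻¹ * g * h) (o h x z) (u h y z)

/-- For a biquandle `X` of finite type `m` and `k > 0`, the iterated operations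
`⟨under⟩*^{[i]}`, `⟨over⟩*^{[i]}` descend to well-defined operations indexed by
`ℤ_{km}`, making `X` a `ℤ_{km}`-family of biquandles. -/
theorem stmt_19 {X : Type*} (B : Biquandle X)
    (U O : ℤ → X → X → X)
    (hU0 : ∀ a b, U 0 a b = a) (hU1 : ∀ a b, U 1 a b = B.u a b)
    (hUrec : ∀ (i j : ℤ) (a b : X), U (i + j) a b = U j (U i a b) (U i b b))
    (hO0 : ∀ a b, O 0 a b = a) (hO1 : ∀ a b, O 1 a b = B.o a b)
    (hOrec : ∀ (i j : ℤ) (a b : X), O (i + j) a b = O j (O i a b) (O i b b))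
    (m : ℕ)
    (hm : IsLeast {n : ℕ | 0 < n ∧ ∀ a b : X, U n a b = a ∧ O n a b = a} m)
    (k : ℕ) (hk : 0 < k) :
    ∃ F : GFamilyBiquandle (Multiplicative (ZMod (k * m))) X,
      ∀ (n : ℤ) (x y : X),
        F.u (Multiplicative.ofAdd (n : ZMod (k * m))) x y = U n x y ∧
        F.o (Multiplicative.ofAdd (n : ZMod (k * m))) x y = O n x y := by
  obtain ⟨⟨hmpos, hmfix⟩, -⟩ := hm
  have hNpos : 0 < k * m := Nat.mul_pos hk hmpos
  haveI : NeZero (k * m) := ⟨hNpos.ne'⟩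
  -- step lemmas
  have Ustep : ∀ (n : ℤ) (a b : X), U (n + 1) a b = B.u (U n a b) (U n b b) := by
    intro n a b; rw [hUrec n 1, hU1]
  have Ostep : ∀ (n : ℤ) (a b : X), O (n + 1) a b = B.o (O n a b) (O n b b) := by
    intro n a b; rw [hOrec n 1, hO1]
  have hUm : ∀ a b : X, U (m : ℤ) a b = a := fun a b => (hmfix a b).1
  have hOm : ∀ a b : X, O (m : ℤ) a b = a := fun a b => (hmfix a b).2
  have hUper : ∀ (n : ℤ) (a b : X), U (n + m) a b = U n a b := by
    intro n a b; rw [hUrec n m, hUm]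
  have hOper : ∀ (n : ℤ) (a b : X), O (n + m) a b = O n a b := by
    intro n a b; rw [hOrec n m, hOm]
  have Umul : ∀ (t n : ℤ) (a b : X), U (n + m * t) a b = U n a b := by
    intro t
    induction t using Int.induction_on with
    | zero => intro n a b; norm_num
    | succ i ih =>
      intro n a b
      have e : n + (m : ℤ) * (i + 1) = (n + m * i) + m := by ring
      rw [e, hUper, ih]
    | pred i ih =>
      intro n a b
      have h2 := hUper (n + m * (-(i : ℤ) - 1)) a b
      have e : n + (m : ℤ) * (-(i : ℤ) - 1) + m = n + (m : ℤ) * (-(i : ℤ)) := by ring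
      rw [e, ih] at h2
      exact h2.symm
  have Omul : ∀ (t n : ℤ) (a b : X), O (n + m * t) a b = O n a b := by
    intro t
    induction t using Int.induction_on with
    | zero => intro n a b; norm_num
    | succ i ih =>
      intro n a b
      have e : n + (m : ℤ) * (i + 1) = (n + m * i) + m := by ring
      rw [e, hOper, ih]
    | pred i ih =>
      intro n a b
      have h2 := hOper (n + m * (-(i : ℤ) - 1)) a b
      have e : n + (m : ℤ) * (-(i : ℤ) - 1) + m = n + (m : ℤ) * (-(i : ℤ)) := by ring
      rw [e, ih] at h2
      exact h2.symm
  have Ucong : ∀ (n n' : ℤ), ((n : ZMod (k * m)) = (n' : ZMod (k * m))) →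
      ∀ a b : X, U n a b = U n' a b := by
    intro n n' h a b
    obtain ⟨t, ht⟩ := ((ZMod.intCast_eq_intCast_iff _ _ _).mp h).dvd
    have hn' : n' = n + (m : ℤ) * ((k : ℤ) * t) := by push_cast at ht; linarith
    rw [hn', Umul]
  have Ocong : ∀ (n n' : ℤ), ((n : ZMod (k * m)) = (n' : ZMod (k * m))) →
      ∀ a b : X, O n a b = O n' a b := by
    intro n n' h a b
    obtain ⟨t, ht⟩ := ((ZMod.intCast_eq_intCast_iff _ _ _).mp h).dvd
    have hn' : n' = n + (m : ℤ) * ((k : ℤ) * t) := by push_cast at ht; linarith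
    rw [hn', Omul]
  have valcast : ∀ g : ZMod (k * m), (((g.val : ℤ) : ZMod (k * m))) = g := by
    intro g
    simp [ZMod.natCast_val, ZMod.cast_id]
  -- diagonal lemma
  have Dnat : ∀ (i : ℕ) (x : X), U (i : ℤ) x x = O (i : ℤ) x x := by
    intro i
    induction i with
    | zero => intro x; simp only [Nat.cast_zero, hU0, hO0]
    | succ i ih =>
      intro x
      rw [show ((i + 1 : ℕ) : ℤ) = (i : ℤ) + 1 by push_cast; ring]
      rw [Ustep, Ostep, ih, B.diag]
  -- single-step exchange lemmas
  have A1 : ∀ (i : ℕ) (x y z : X),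
      B.u (U (i : ℤ) x y) (O (i : ℤ) z y) = U (i : ℤ) (B.u x z) (B.u y z) := by
    intro i
    induction i with
    | zero => intro x y z; simp only [Nat.cast_zero, hU0, hO0]
    | succ i ih =>
      intro x y z
      rw [show ((i + 1 : ℕ) : ℤ) = (i : ℤ) + 1 by push_cast; ring]
      rw [Ustep, Ostep, ← Dnat i y, ← B.ex1 (U (i : ℤ) x y) (O (i : ℤ) z y) (U (i : ℤ) y y),
        ih x y z, ih y y z, Ustep]
  have A2 : ∀ (i : ℕ) (x y z : X),
      B.u (O (i : ℤ) x y) (O (i : ℤ) z y) = O (i : ℤ) (B.u x z) (B.u y z) := by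
    intro i
    induction i with
    | zero => intro x y z; simp only [Nat.cast_zero, hU0, hO0]
    | succ i ih =>
      intro x y z
      rw [show ((i + 1 : ℕ) : ℤ) = (i : ℤ) + 1 by push_cast; ring]
      rw [Ostep, Ostep, ← B.ex2 (O (i : ℤ) x y) (O (i : ℤ) z y) (O (i : ℤ) y y),
        ih x y z, ih y y z, Ostep]
  have A3 : ∀ (i : ℕ) (x y z : X),
      B.o (O (i : ℤ) x y) (O (i : ℤ) z y) = O (i : ℤ) (B.o x z) (B.u y z) := by
    intro i
    induction i with
    | zero => intro x y z; simp only [Nat.cast_zero, hU0, hO0]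
    | succ i ih =>
      intro x y z
      rw [show ((i + 1 : ℕ) : ℤ) = (i : ℤ) + 1 by push_cast; ring]
      rw [Ostep, Ostep, B.ex3 (O (i : ℤ) x y) (O (i : ℤ) y y) (O (i : ℤ) z y),
        ih x y z, A2 i y y z, Ostep]
  -- full exchange lemmas
  have E2 : ∀ (j i : ℕ) (x y z : X),
      U (j : ℤ) (O (i : ℤ) x y) (O (i : ℤ) z y)
        = O (i : ℤ) (U (j : ℤ) x z) (U (j : ℤ) y z) := by
    intro j
    induction j with
    | zero => intro i x y z; simp [hU0, hO0]
    | succ j ih =>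
      intro i x y z
      rw [show ((j + 1 : ℕ) : ℤ) = (j : ℤ) + 1 by push_cast; ring]
      rw [Ustep, ih i x y z, ih i z y z, A2 i, ← Ustep, ← Ustep]
  have E1 : ∀ (j i : ℕ) (x y z : X),
      U (j : ℤ) (U (i : ℤ) x y) (O (i : ℤ) z y)
        = U (i : ℤ) (U (j : ℤ) x z) (U (j : ℤ) y z) := by
    intro j
    induction j with
    | zero => intro i x y z; simp [hU0, hO0]
    | succ j ih =>
      intro i x y z
      rw [show ((j + 1 : ℕ) : ℤ) = (j : ℤ) + 1 by push_cast; ring]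
      rw [Ustep, ih i x y z, E2 j i z y z, A1 i, ← Ustep, ← Ustep]
  have E3 : ∀ (j i : ℕ) (x y z : X),
      O (j : ℤ) (O (i : ℤ) x y) (O (i : ℤ) z y)
        = O (i : ℤ) (O (j : ℤ) x z) (U (j : ℤ) y z) := by
    intro j
    induction j with
    | zero => intro i x y z; simp [hU0, hO0]
    | succ j ih =>
      intro i x y z
      rw [show ((j + 1 : ℕ) : ℤ) = (j : ℤ) + 1 by push_cast; ring]
      rw [Ostep, ih i x y z, ih i z y z, A3 i, ← Ostep, ← Dnat j z, ← Ustep]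
  -- conjugation is trivial in the commutative group
  have conj : ∀ g h : Multiplicative (ZMod (k * m)), h⁻¹ * g * h = g := by
    intro g h
    rw [mul_comm (h⁻¹ * g) h, ← mul_assoc, mul_inv_cancel, one_mul]
  -- the family
  refine ⟨{
    nonempty := B.nonempty
    u := fun g x y => U (((Multiplicative.toAdd g).val : ℤ)) x y
    o := fun g x y => O (((Multiplicative.toAdd g).val : ℤ)) x y
    diag := fun g x => Dnat _ x
    uComp := ?_
    uOne := ?_
    oComp := ?_
    oOne := ?_
    ex1 := ?_
    ex2 := ?_
    ex3 := ?_ }, ?_⟩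
  · intro g h x y
    have hc : ((((Multiplicative.toAdd (g * h)).val : ℤ)) : ZMod (k * m))
        = (((((Multiplicative.toAdd g).val : ℤ) + ((Multiplicative.toAdd h).val : ℤ) : ℤ)) : ZMod (k * m)) := by
      push_cast [valcast]
      rfl
    rw [Ucong _ _ hc, hUrec]
  · intro x y
    simp only [toAdd_one, ZMod.val_zero, Nat.cast_zero, hU0]
  · intro g h x y
    have hc : ((((Multiplicative.toAdd (g * h)).val : ℤ)) : ZMod (k * m))
        = (((((Multiplicative.toAdd g).val : ℤ) + ((Multiplicative.toAdd h).val : ℤ) : ℤ)) : ZMod (k * m)) := by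
      push_cast [valcast]
      rfl
    rw [Ocong _ _ hc, hOrec]
  · intro x y
    simp only [toAdd_one, ZMod.val_zero, Nat.cast_zero, hO0]
  · intro g h x y z
    rw [conj]
    exact E1 _ _ x y z
  · intro g h x y z
    rw [conj]
    exact E2 _ _ x y z
  · intro g h x y z
    rw [conj]
    exact E3 _ _ x y z
  · intro n x y
    constructor
    · exact Ucong _ n (by rw [valcast]; rfl) x y
    · exact Ocong _ n (by rw [valcast]; rfl) x y
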